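/- arXiv:2207.02822 — 2 statements merged into one kernel-verified Lean document; each statement's English description precedes it below -/
import Mathlib

section
/- Combining magic wands: for qualitative expectations φ, ψ and a one-bounded expectation X, one has φ -⋆ (ψ -⋆ X) = (φ ⋆ ψ) -⋆ X. -/
open ENNReal

abbrev Heap := ℤ → Option ℤ
abbrev Stack := String → ℤ
abbrev PState := Stack × Heap
abbrev Exp := PState → ℝ≥0∞

/-- Heaps are disjoint if their domains are disjoint. -/
def HDisj (h₁ h₂ : Heap) : Prop := ∀ l, h₁ l = none ∨ h₂ l = none

/-- Disjoint union of heaps. -/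
def HJoin (h₁ h₂ : Heap) : Heap := fun l => (h₁ l).orElse (fun _ => h₂ l)

/-- Separating multiplication: (X ⋆ Y)(s,h) = sup { X(s,h₁)·Y(s,h₂) | h₁ ⋆ h₂ = h }. -/
noncomputable def sepMul (X Y : Exp) : Exp := fun σ =>
  ⨆ h₁, ⨆ h₂, ⨆ (_ : HDisj h₁ h₂ ∧ HJoin h₁ h₂ = σ.2), X (σ.1, h₁) * Y (σ.1, h₂)

/-- One-bounded expectations take values in [0,1]. -/
def OneBounded (X : Exp) : Prop := ∀ σ, X σ ≤ 1

/-- Qualitative expectations take values in {0,1}. -/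
def Qualitative (φ : Exp) : Prop := ∀ σ, φ σ = 0 ∨ φ σ = 1

/-- Guarded magic wand: (φ -⋆ X)(s,h) = inf { X(s, h ⋆ h') | φ(s,h') = 1, h' ⊥ h },
with the infimum of the empty set being 1 (for one-bounded X). -/
noncomputable def wand (φ X : Exp) : Exp := fun σ =>
  (⨅ h' : {h' : Heap // φ (σ.1, h') = 1 ∧ HDisj σ.2 h'}, X (σ.1, HJoin σ.2 h'.1)) ⊓ 1

lemma hjoin_none_iff (a b : Heap) (l : ℤ) : HJoin a b l = none ↔ a l = none ∧ b l = none := by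
  simp [HJoin, Option.orElse]
  cases a l <;> simp

lemma hjoin_assoc (a b c : Heap) : HJoin (HJoin a b) c = HJoin a (HJoin b c) := by
  funext l
  simp only [HJoin, Option.orElse]
  cases a l <;> rfl

lemma hdisj_join_left (h a b : Heap) (hd : HDisj h (HJoin a b)) : HDisj h a := by
  intro l
  rcases hd l with e | e
  · exact Or.inl e
  · exact Or.inr ((hjoin_none_iff a b l).mp e).1

lemma hdisj_assemble (h a b : Heap) (hd : HDisj h (HJoin a b)) (hab : HDisj a b) :
    HDisj (HJoin h a) b := by
  intro l
  rcases hab l with e | e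
  · rcases hd l with e' | e'
    · exact Or.inl ((hjoin_none_iff h a l).mpr ⟨e', e⟩)
    · exact Or.inr ((hjoin_none_iff a b l).mp e').2
  · exact Or.inr e

lemma hdisj_of_join_left (h a b : Heap) (hd : HDisj (HJoin h a) b) : HDisj a b := by
  intro l
  rcases hd l with e | e
  · exact Or.inl ((hjoin_none_iff h a l).mp e).2
  · exact Or.inr e

lemma hdisj_join_right (h a b : Heap) (hha : HDisj h a) (hd : HDisj (HJoin h a) b) :
    HDisj h (HJoin a b) := by
  intro l
  rcases hha l with e | e
  · exact Or.inl e
  · rcases hd l with e' | e'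
    · exact Or.inl ((hjoin_none_iff h a l).mp e').1
    · right
      rw [hjoin_none_iff]
      exact ⟨e, e'⟩

lemma sepMul_eq_one_iff (φ ψ : Exp) (hφ : Qualitative φ) (hψ : Qualitative ψ) (σ : PState) :
    sepMul φ ψ σ = 1 ↔ ∃ h₁ h₂, HDisj h₁ h₂ ∧ HJoin h₁ h₂ = σ.2 ∧
      φ (σ.1, h₁) = 1 ∧ ψ (σ.1, h₂) = 1 := by
  constructor
  · intro h1
    by_contra hc
    push_neg at hc
    have : sepMul φ ψ σ = 0 := by
      refine le_antisymm ?_ zero_le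
      refine iSup_le fun h₁ => iSup_le fun h₂ => iSup_le fun ⟨hd, hj⟩ => ?_
      rcases hφ (σ.1, h₁) with e | e
      · simp [e]
      rcases hψ (σ.1, h₂) with e2 | e2
      · simp [e2]
      exact absurd e2 (hc h₁ h₂ hd hj e)
    rw [this] at h1
    exact zero_ne_one h1
  · rintro ⟨h₁, h₂, hd, hj, e1, e2⟩
    refine le_antisymm ?_ ?_
    · refine iSup_le fun a => iSup_le fun b => iSup_le fun _ => ?_
      rcases hφ (σ.1, a) with e | e <;> rcases hψ (σ.1, b) with e' | e' <;> simp [e, e']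
    · calc (1 : ℝ≥0∞) = φ (σ.1, h₁) * ψ (σ.1, h₂) := by rw [e1, e2, one_mul]
        _ ≤ _ := by
          refine le_trans ?_ (le_iSup _ h₁)
          refine le_trans ?_ (le_iSup _ h₂)
          exact le_iSup_of_le ⟨hd, hj⟩ le_rfl

theorem wand_wand_eq_sepMul_wand (φ ψ X : Exp)
    (hφ : Qualitative φ) (hψ : Qualitative ψ) (hX : OneBounded X) :
    wand φ (wand ψ X) = wand (sepMul φ ψ) X := by
  funext σ
  obtain ⟨s, h⟩ := σ
  simp only [wand]
  apply le_antisymm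
  · refine le_inf ?_ inf_le_right
    refine le_iInf fun ⟨h', hsep, hd⟩ => ?_
    obtain ⟨h₁, h₂, hd12, hj, e1, e2⟩ := (sepMul_eq_one_iff φ ψ hφ hψ (s, h')).mp hsep
    have hd1 : HDisj h h₁ := hdisj_join_left h h₁ h₂ (by rwa [hj])
    have hd2 : HDisj (HJoin h h₁) h₂ := hdisj_assemble h h₁ h₂ (by rwa [hj]) hd12
    refine le_trans inf_le_left ?_
    refine le_trans (iInf_le _ ⟨h₁, e1, hd1⟩) ?_
    refine le_trans inf_le_left ?_
    refine le_trans (iInf_le _ ⟨h₂, e2, hd2⟩) ?_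
    simp only
    rw [hjoin_assoc, hj]
  · have hrle1 : (⨅ h' : {h' : Heap // sepMul φ ψ (s, h') = 1 ∧ HDisj h h'},
        X (s, HJoin h h'.1)) ⊓ 1 ≤ 1 := inf_le_right
    refine le_inf (le_iInf fun ⟨h₁, e1, hd1⟩ => le_inf (le_iInf fun ⟨h₂, e2, hd2⟩ => ?_) hrle1) hrle1
    have hd12 : HDisj h₁ h₂ := hdisj_of_join_left h h₁ h₂ hd2
    have hsep : sepMul φ ψ (s, HJoin h₁ h₂) = 1 :=
      (sepMul_eq_one_iff φ ψ hφ hψ _).mpr ⟨h₁, h₂, hd12, rfl, e1, e2⟩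
    have hdj : HDisj h (HJoin h₁ h₂) := hdisj_join_right h h₁ h₂ hd1 hd2
    refine le_trans inf_le_left ?_
    refine le_trans (iInf_le _ ⟨HJoin h₁ h₂, hsep, hdj⟩) ?_
    simp only
    rw [← hjoin_assoc]
end

section
/- For a precise one-bounded expectation X, separating multiplication with X distributes over pointwise addition: X ⋆ (Y + Z) = (X ⋆ Y) + (X ⋆ Z). -/
open ENNReal

/-- An expectation is precise if for every state at most one subheap of the heap
gives it a nonzero value. -/
def Precise (X : Exp) : Prop := ∀ (s : Stack) (h : Heap),
  Set.Subsingleton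
    {h1 : Heap | (∃ h2, HDisj h1 h2 ∧ HJoin h1 h2 = h) ∧ 0 < X (s, h1)}


lemma hjoin_right_unique {h1 h2 h2' : Heap} (d : HDisj h1 h2) (d' : HDisj h1 h2')
    (e : HJoin h1 h2 = HJoin h1 h2') : h2 = h2' := by
  funext l
  have := congrFun e l
  rcases d l with hl | hl <;> rcases d' l with hl' | hl' <;>
    simp_all [HJoin, Option.orElse]

lemma sepMul_zero (X W : Exp) (s : Stack) (h : Heap)
    (h0 : ∀ h1 h2, HDisj h1 h2 → HJoin h1 h2 = h → X (s, h1) = 0) :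
    sepMul X W (s, h) = 0 := by
  refine le_antisymm ?_ zero_le
  refine iSup_le fun h1 => iSup_le fun h2 => iSup_le fun hc => ?_
  simp [h0 h1 h2 hc.1 hc.2]

lemma sepMul_unique (X W : Exp) (s : Stack) (h h1 h2 : Heap)
    (d : HDisj h1 h2) (e : HJoin h1 h2 = h)
    (uniq : ∀ h1' h2', HDisj h1' h2' → HJoin h1' h2' = h → 0 < X (s, h1') → h1' = h1) :
    sepMul X W (s, h) = X (s, h1) * W (s, h2) := by
  refine le_antisymm ?_ ?_
  · refine iSup_le fun h1' => iSup_le fun h2' => iSup_le fun hc => ?_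
    rcases eq_or_lt_of_le (show 0 ≤ X (s, h1') from zero_le) with h0 | hpos
    · simp [← h0]
    · have e1 : h1' = h1 := uniq h1' h2' hc.1 hc.2 hpos
      subst e1
      have e2 : h2' = h2 := hjoin_right_unique hc.1 d (hc.2.trans e.symm)
      subst e2; exact le_refl _
  · refine le_trans ?_ (le_iSup _ h1)
    refine le_trans ?_ (le_iSup _ h2)
    exact le_iSup_of_le ⟨d, e⟩ (le_refl _)

theorem precise_sepMul_add (X Y Z : Exp)
    (hX : OneBounded X) (hY : OneBounded Y) (hZ : OneBounded Z)
    (hprec : Precise X) :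
    sepMul X (fun σ => Y σ + Z σ) =
      fun σ => sepMul X Y σ + sepMul X Z σ := by
  funext σ
  obtain ⟨s, h⟩ := σ
  by_cases hex : ∃ h1 h2, HDisj h1 h2 ∧ HJoin h1 h2 = h ∧ 0 < X (s, h1)
  · obtain ⟨h1, h2, d, e, hpos⟩ := hex
    have uniq : ∀ h1' h2', HDisj h1' h2' → HJoin h1' h2' = h → 0 < X (s, h1') → h1' = h1 := by
      intro h1' h2' d' e' hpos'
      exact hprec s h ⟨⟨h2', d', e'⟩, hpos'⟩ ⟨⟨h2, d, e⟩, hpos⟩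
    rw [sepMul_unique X _ s h h1 h2 d e uniq, sepMul_unique X Y s h h1 h2 d e uniq,
      sepMul_unique X Z s h h1 h2 d e uniq]
    exact mul_add _ _ _
  · push_neg at hex
    have h0 : ∀ W : Exp, ∀ h1 h2, HDisj h1 h2 → HJoin h1 h2 = h → X (s, h1) = 0 := by
      intro W h1 h2 d e
      simpa using hex h1 h2 d e
    simp only [sepMul_zero X _ s h (h0 Y), sepMul_zero X Y s h (h0 Y),
      sepMul_zero X Z s h (h0 Z), add_zero]
end
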